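/- Let G be a graph on [m] and K a field. Consider the two K-algebra homomorphisms from the polynomial ring K[p_R : R ⊆ [m]]: the standard parametrization φ_G into K[a^S_T : S a maximal clique of G, T ⊆ S] defined by p_R ↦ ∏_{S maximal clique of G} a^S_{S∩R}, and the alternative parametrization ψ_G into K[c_C : C ∈ C(G)] defined by p_R ↦ ∏_{C ∈ C(G), C ⊆ R} c_C, where C(G) is the set of all cliques of G including the empty clique. Then ker φ_G = ker ψ_G. -/
import Mathlib


open scoped BigOperators
attribute [local instance] Classical.propDecidable

noncomputable section

open MvPolynomial

/-- `S` is a maximal clique of `G`. -/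
def IsMaxClique {m : ℕ} (G : SimpleGraph (Fin m)) (S : Finset (Fin m)) : Prop :=
  G.IsClique (S : Set (Fin m)) ∧
    ∀ T : Finset (Fin m), G.IsClique (T : Set (Fin m)) → S ⊆ T → T = S

/-- Index type for the variables `a^S_T` of the standard parametrization:
pairs `(S, T)` with `S` a maximal clique of `G` and `T ⊆ S`. -/
abbrev MaxCliquePairs {m : ℕ} (G : SimpleGraph (Fin m)) : Type :=
  {ST : Finset (Fin m) × Finset (Fin m) // IsMaxClique G ST.1 ∧ ST.2 ⊆ ST.1}

/-- Index type for the variables `c_C` of the alternative parametrization: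
the cliques of `G` (including the empty clique). -/
abbrev Cliques {m : ℕ} (G : SimpleGraph (Fin m)) : Type :=
  {C : Finset (Fin m) // G.IsClique (C : Set (Fin m))}

/-- The standard parametrization `φ_G`: `p_R ↦ ∏_{S maximal clique} a^S_{S ∩ R}`. -/
def stdParam {m : ℕ} (G : SimpleGraph (Fin m)) (K : Type*) [CommRing K] :
    MvPolynomial (Finset (Fin m)) K →ₐ[K] MvPolynomial (MaxCliquePairs G) K :=
  aeval (fun R : Finset (Fin m) =>
    ∏ S : {S : Finset (Fin m) // IsMaxClique G S},
      (X (⟨(S.1, S.1 ∩ R), ⟨S.2, Finset.inter_subset_left⟩⟩ : MaxCliquePairs G) :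
        MvPolynomial (MaxCliquePairs G) K))

/-- The alternative parametrization `ψ_G`: `p_R ↦ ∏_{C clique of G, C ⊆ R} c_C`. -/
def altParam {m : ℕ} (G : SimpleGraph (Fin m)) (K : Type*) [CommRing K] :
    MvPolynomial (Finset (Fin m)) K →ₐ[K] MvPolynomial (Cliques G) K :=
  aeval (fun R : Finset (Fin m) =>
    ∏ C ∈ Finset.univ.filter (fun C : Cliques G => (C.1 : Finset (Fin m)) ⊆ R),
      (X C : MvPolynomial (Cliques G) K))

/-! ### Auxiliary machinery -/

namespace KerParamAux

variable {m : ℕ} (G : SimpleGraph (Fin m))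

/-- Exponent of the monomial `φ_G(p_R)`. -/
def eStd (R : Finset (Fin m)) : MaxCliquePairs G →₀ ℕ :=
  ∑ S : {S : Finset (Fin m) // IsMaxClique G S},
    Finsupp.single (⟨(S.1, S.1 ∩ R), ⟨S.2, Finset.inter_subset_left⟩⟩ : MaxCliquePairs G) 1

/-- Exponent of the monomial `ψ_G(p_R)`. -/
def eAlt (R : Finset (Fin m)) : Cliques G →₀ ℕ :=
  ∑ C ∈ Finset.univ.filter (fun C : Cliques G => (C.1 : Finset (Fin m)) ⊆ R),
    Finsupp.single C 1

lemma eStd_apply (R : Finset (Fin m)) (idx : MaxCliquePairs G) :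
    eStd G R idx = if idx.1.1 ∩ R = idx.1.2 then 1 else 0 := by
  obtain ⟨⟨S₀, T₀⟩, hmax, hsub⟩ := idx
  rw [eStd, Finsupp.finset_sum_apply]
  rw [Finset.sum_eq_single (⟨S₀, hmax⟩ : {S : Finset (Fin m) // IsMaxClique G S})]
  · rw [Finsupp.single_apply]
    by_cases h : S₀ ∩ R = T₀
    · simp [h]
    · rw [if_neg, if_neg h]
      intro hc
      exact h (congrArg (fun x : MaxCliquePairs G => x.1.2) hc)
  · intro S _ hne
    rw [Finsupp.single_apply, if_neg]
    intro hc
    exact hne (Subtype.ext (congrArg (fun x : MaxCliquePairs G => x.1.1) hc))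
  · simp

lemma eAlt_apply (R : Finset (Fin m)) (C : Cliques G) :
    eAlt G R C = if (C.1 : Finset (Fin m)) ⊆ R then 1 else 0 := by
  rw [eAlt, Finsupp.finset_sum_apply]
  simp only [Finsupp.single_apply]
  rw [Finset.sum_ite_eq' (Finset.univ.filter fun C' : Cliques G => (C'.1 : Finset (Fin m)) ⊆ R) C
    (fun _ => 1)]
  simp

/-- The map on exponents induced by a monomial map. -/
def expMap {τ : Type*} (g : Finset (Fin m) → (τ →₀ ℕ)) (u : Finset (Fin m) →₀ ℕ) : τ →₀ ℕ :=
  u.sum fun R n => n • g R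

lemma expMap_apply {τ : Type*} (g : Finset (Fin m) → (τ →₀ ℕ)) (u : Finset (Fin m) →₀ ℕ)
    (t : τ) : expMap g u t = ∑ R : Finset (Fin m), u R * g R t := by
  rw [expMap, Finsupp.sum_apply, Finsupp.sum_fintype]
  · simp
  · intro R; simp

lemma prod_monomial_one {τ K : Type*} [CommSemiring K] {ι : Type*} (s : Finset ι)
    (g : ι → (τ →₀ ℕ)) :
    (∏ i ∈ s, (monomial (g i) (1 : K))) = monomial (∑ i ∈ s, g i) 1 := by
  induction s using Finset.cons_induction with
  | empty => simp [MvPolynomial.monomial_zero']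
  | cons a s ha ih =>
      rw [Finset.prod_cons, ih, MvPolynomial.monomial_mul, Finset.sum_cons, one_mul]

lemma aeval_monomial_map {τ K : Type*} [CommSemiring K] (g : Finset (Fin m) → (τ →₀ ℕ))
    (p : MvPolynomial (Finset (Fin m)) K) :
    (aeval fun R => (monomial (g R) (1 : K))) p
      = ∑ u ∈ p.support, monomial (expMap g u) (coeff u p) := by
  conv_lhs => rw [p.as_sum]
  rw [map_sum]
  refine Finset.sum_congr rfl fun u _ => ?_
  rw [aeval_monomial]
  have : (u.prod fun i k => (monomial (g i) (1 : K)) ^ k)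
      = monomial (expMap g u) 1 := by
    rw [Finsupp.prod, expMap, Finsupp.sum]
    rw [← prod_monomial_one]
    refine Finset.prod_congr rfl fun R _ => ?_
    rw [MvPolynomial.monomial_pow, one_pow]
  rw [this, algebraMap_eq, C_mul_monomial, mul_one]

lemma aeval_monomial_map_eq_zero_iff {τ K : Type*} [CommSemiring K]
    (g : Finset (Fin m) → (τ →₀ ℕ)) (p : MvPolynomial (Finset (Fin m)) K) :
    (aeval fun R => (monomial (g R) (1 : K))) p = 0 ↔
      ∀ u ∈ p.support,
        ∑ w ∈ p.support, (if expMap g w = expMap g u then coeff w p else 0) = 0 := by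
  rw [aeval_monomial_map]
  constructor
  · intro h u hu
    have hc := congrArg (coeff (expMap g u)) h
    rw [MvPolynomial.coeff_sum] at hc
    simp only [coeff_monomial, coeff_zero] at hc
    exact hc
  · intro h
    apply MvPolynomial.ext
    intro d
    rw [MvPolynomial.coeff_sum, coeff_zero]
    simp only [coeff_monomial]
    by_cases hd : ∃ u ∈ p.support, expMap g u = d
    · obtain ⟨u, hu, hud⟩ := hd
      subst hud
      exact h u hu
    · push_neg at hd
      rw [Finset.sum_eq_zero]
      intro w hw
      rw [if_neg (hd w hw)]

/-! ### The combinatorial heart -/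

/-- Fiber count for the standard parametrization. -/
def Nstd (u : Finset (Fin m) →₀ ℕ) (S T : Finset (Fin m)) : ℕ :=
  ∑ R ∈ Finset.univ.filter (fun R : Finset (Fin m) => S ∩ R = T), u R

/-- Fiber count for the alternative parametrization. -/
def Nalt (u : Finset (Fin m) →₀ ℕ) (C : Finset (Fin m)) : ℕ :=
  ∑ R ∈ Finset.univ.filter (fun R : Finset (Fin m) => C ⊆ R), u R

lemma expMap_eStd_apply (u : Finset (Fin m) →₀ ℕ) (idx : MaxCliquePairs G) :
    expMap (eStd G) u idx = Nstd u idx.1.1 idx.1.2 := by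
  rw [expMap_apply, Nstd, Finset.sum_filter]
  refine Finset.sum_congr rfl fun R _ => ?_
  rw [eStd_apply]
  by_cases h : idx.1.1 ∩ R = idx.1.2 <;> simp [h]

lemma expMap_eAlt_apply (u : Finset (Fin m) →₀ ℕ) (C : Cliques G) :
    expMap (eAlt G) u C = Nalt u C.1 := by
  rw [expMap_apply, Nalt, Finset.sum_filter]
  refine Finset.sum_congr rfl fun R _ => ?_
  rw [eAlt_apply]
  by_cases h : (C.1 : Finset (Fin m)) ⊆ R <;> simp [h]

lemma Nalt_eq_sum (u : Finset (Fin m) →₀ ℕ) (S C : Finset (Fin m)) (hCS : C ⊆ S) :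
    Nalt u C = ∑ T ∈ S.powerset.filter (fun T => C ⊆ T), Nstd u S T := by
  rw [Nalt]
  rw [← Finset.sum_fiberwise_of_maps_to (g := fun R => S ∩ R)
    (t := S.powerset.filter (fun T => C ⊆ T)) (fun R hR => by
      simp only [Finset.mem_filter, Finset.mem_powerset] at hR ⊢
      exact ⟨Finset.inter_subset_left, Finset.subset_inter hCS hR.2⟩) u]
  refine Finset.sum_congr rfl fun T hT => ?_
  simp only [Finset.mem_filter, Finset.mem_powerset] at hT
  rw [Nstd]
  congr 1
  rw [Finset.filter_filter]
  apply Finset.filter_congr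
  intro R _
  constructor
  · intro h; exact h.2
  · intro h
    refine ⟨?_, h⟩
    calc C ⊆ T := hT.2
    _ = S ∩ R := h.symm
    _ ⊆ R := Finset.inter_subset_right

lemma exists_maxclique_supset (C : Finset (Fin m)) (hC : G.IsClique (C : Set (Fin m))) :
    ∃ S, IsMaxClique G S ∧ C ⊆ S := by
  obtain ⟨S, hS, hmax⟩ := Finset.exists_max_image
    (Finset.univ.filter fun T : Finset (Fin m) => G.IsClique (T : Set (Fin m)) ∧ C ⊆ T)
    Finset.card ⟨C, by simp [hC]⟩
  simp only [Finset.mem_filter, Finset.mem_univ, true_and] at hS hmax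
  refine ⟨S, ⟨hS.1, fun T hT hST => ?_⟩, hS.2⟩
  have hTcard := hmax T ⟨hT, hS.2.trans hST⟩
  exact (Finset.eq_of_subset_of_card_le hST hTcard).symm

/-- The two exponent maps have identical fibers. -/
lemma fibers_eq (u v : Finset (Fin m) →₀ ℕ) :
    expMap (eStd G) u = expMap (eStd G) v ↔
      expMap (eAlt G) u = expMap (eAlt G) v := by
  constructor
  · intro h
    apply Finsupp.ext
    intro C
    rw [expMap_eAlt_apply, expMap_eAlt_apply]
    obtain ⟨S, hSmax, hCS⟩ := exists_maxclique_supset G C.1 C.2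
    rw [Nalt_eq_sum u S C.1 hCS, Nalt_eq_sum v S C.1 hCS]
    refine Finset.sum_congr rfl fun T hT => ?_
    simp only [Finset.mem_filter, Finset.mem_powerset] at hT
    have := DFunLike.congr_fun h (⟨(S, T), hSmax, hT.1⟩ : MaxCliquePairs G)
    rw [expMap_eStd_apply, expMap_eStd_apply] at this
    exact this
  · intro h
    apply Finsupp.ext
    intro idx
    rw [expMap_eStd_apply, expMap_eStd_apply]
    obtain ⟨⟨S, T₀⟩, hSmax, hT₀S⟩ := idx
    have halt : ∀ C : Finset (Fin m), C ⊆ S → Nalt u C = Nalt v C := by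
      intro C hCS
      have hC : G.IsClique (C : Set (Fin m)) :=
        hSmax.1.subset (Finset.coe_subset.mpr hCS)
      have := DFunLike.congr_fun h (⟨C, hC⟩ : Cliques G)
      rw [expMap_eAlt_apply, expMap_eAlt_apply] at this
      exact this
    -- downward induction on T within subsets of S
    have key : ∀ n : ℕ, ∀ T : Finset (Fin m), T ⊆ S → (S \ T).card ≤ n →
        Nstd u S T = Nstd v S T := by
      intro n
      induction n with
      | zero =>
          intro T hTS hcard
          have hTS' : T = S := by
            have : S \ T = ∅ := Finset.card_eq_zero.mp (Nat.le_zero.mp hcard)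
            have hST : S ⊆ T := Finset.sdiff_eq_empty_iff_subset.mp this
            exact Finset.Subset.antisymm hTS hST
          subst hTS'
          have h1 := Nalt_eq_sum u T T (Finset.Subset.refl T)
          have h2 := Nalt_eq_sum v T T (Finset.Subset.refl T)
          have hsingle : (T.powerset.filter fun T' => T ⊆ T') = {T} := by
            apply Finset.ext
            intro T'
            simp only [Finset.mem_filter, Finset.mem_powerset, Finset.mem_singleton]
            constructor
            · rintro ⟨h1', h2'⟩; exact Finset.Subset.antisymm h1' h2'
            · rintro rfl; exact ⟨Finset.Subset.refl _, Finset.Subset.refl _⟩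
          rw [hsingle, Finset.sum_singleton] at h1 h2
          rw [← h1, ← h2, halt T (Finset.Subset.refl T)]
      | succ n ih =>
          intro T hTS hcard
          have hTmem : T ∈ S.powerset.filter fun T' => T ⊆ T' := by
            simp [Finset.mem_powerset, hTS]
          have h1 := Nalt_eq_sum u S T hTS
          have h2 := Nalt_eq_sum v S T hTS
          rw [← Finset.add_sum_erase _ _ hTmem] at h1 h2
          have hrest : ∑ T' ∈ (S.powerset.filter fun T' => T ⊆ T').erase T, Nstd u S T'
              = ∑ T' ∈ (S.powerset.filter fun T' => T ⊆ T').erase T, Nstd v S T' := by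
            refine Finset.sum_congr rfl fun T' hT' => ?_
            rw [Finset.mem_erase, Finset.mem_filter, Finset.mem_powerset] at hT'
            obtain ⟨hne, hT'S, hTT'⟩ := hT'
            apply ih T' hT'S
            have hss : S \ T' ⊂ S \ T := by
              refine Finset.ssubset_iff_of_subset (Finset.sdiff_subset_sdiff
                (Finset.Subset.refl S) hTT') |>.mpr ?_
              obtain ⟨x, hxT', hxT⟩ := Finset.exists_of_ssubset
                (Finset.ssubset_iff_subset_ne.mpr ⟨hTT', Ne.symm hne⟩)
              exact ⟨x, Finset.mem_sdiff.mpr ⟨hT'S hxT', hxT⟩,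
                fun hx => (Finset.mem_sdiff.mp hx).2 hxT'⟩
            have := Finset.card_lt_card hss
            omega
          have hTalt := halt T hTS
          rw [h1, h2, hrest] at hTalt
          exact Nat.add_right_cancel hTalt
    exact key (S \ T₀).card T₀ hT₀S le_rfl

/-! ### The parametrizations as monomial maps -/

lemma stdParam_eq (K : Type*) [CommRing K] :
    stdParam G K = aeval fun R => (monomial (eStd G R) (1 : K)) := by
  have hf : (fun R : Finset (Fin m) =>
      ∏ S : {S : Finset (Fin m) // IsMaxClique G S},
        (X (⟨(S.1, S.1 ∩ R), ⟨S.2, Finset.inter_subset_left⟩⟩ : MaxCliquePairs G) :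
          MvPolynomial (MaxCliquePairs G) K))
      = fun R => monomial (eStd G R) (1 : K) := by
    funext R
    rw [eStd, ← prod_monomial_one]
    rfl
  rw [stdParam, hf]

lemma altParam_eq (K : Type*) [CommRing K] :
    altParam G K = aeval fun R => (monomial (eAlt G R) (1 : K)) := by
  have hf : (fun R : Finset (Fin m) =>
      ∏ C ∈ Finset.univ.filter (fun C : Cliques G => (C.1 : Finset (Fin m)) ⊆ R),
        (X C : MvPolynomial (Cliques G) K))
      = fun R => monomial (eAlt G R) (1 : K) := by
    funext R
    rw [eAlt, ← prod_monomial_one]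
    rfl
  rw [altParam, hf]

end KerParamAux

open KerParamAux in
/-- The standard and alternative parametrizations of the binary graphical model of `G`
have the same kernel. -/
theorem ker_stdParam_eq_ker_altParam
    (m : ℕ) (G : SimpleGraph (Fin m)) (K : Type*) [Field K] :
    RingHom.ker (stdParam G K).toRingHom = RingHom.ker (altParam G K).toRingHom := by
  ext p
  rw [RingHom.mem_ker, RingHom.mem_ker]
  change stdParam G K p = 0 ↔ altParam G K p = 0
  rw [stdParam_eq, altParam_eq,
    aeval_monomial_map_eq_zero_iff, aeval_monomial_map_eq_zero_iff]
  constructor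
  · intro h u hu
    refine (Finset.sum_congr rfl fun w _ => ?_).trans (h u hu)
    by_cases hw : expMap (eStd G) w = expMap (eStd G) u
    · rw [if_pos ((fibers_eq G w u).mp hw), if_pos hw]
    · rw [if_neg (fun hc => hw ((fibers_eq G w u).mpr hc)), if_neg hw]
  · intro h u hu
    refine (Finset.sum_congr rfl fun w _ => ?_).trans (h u hu)
    by_cases hw : expMap (eAlt G) w = expMap (eAlt G) u
    · rw [if_pos ((fibers_eq G w u).mpr hw), if_pos hw]
    · rw [if_neg (fun hc => hw ((fibers_eq G w u).mp hc)), if_neg hw]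

end
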